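/- Any skew Bollobás system of pairs of subspaces (A_i, B_i) of a vector space V over a field, with dim A_i = a and dim B_i = b for all i, A_i ∩ B_i = {0}, and A_i ∩ B_j ≠ {0} for i < j, satisfies m ≤ C(a+b, a), where m is the number of pairs. In particular the upper bound holds independently of dim V. -/

import Mathlib

open Module ExteriorAlgebra

private lemma comp_append {α β : Type*} {p q : ℕ} (φ : α → β) (x : Fin p → α) (y : Fin q → α) :
    φ ∘ Fin.append x y = Fin.append (φ ∘ x) (φ ∘ y) := by
  funext i
  refine Fin.addCases (fun i => ?_) (fun i => ?_) i <;>
    simp [Fin.append_left, Fin.append_right]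

private lemma iMulti_append {R M : Type*} [CommRing R] [AddCommGroup M] [Module R M] {p q : ℕ}
    (x : Fin p → M) (y : Fin q → M) :
    ιMulti R p x * ιMulti R q y = ιMulti R (p + q) (Fin.append x y) := by
  rw [ιMulti_apply, ιMulti_apply, ιMulti_apply, ← List.prod_append]
  congr 1
  have : (fun i => ι R (Fin.append x y i)) = Fin.append (fun i => ι R (x i)) (fun i => ι R (y i)) := by
    have := comp_append (ι R (M := M)) x y
    exact this
  rw [this, List.ofFn_fin_append]

private lemma triangular_indep {L M N : Type*} [Field L] [AddCommGroup M] [Module L M]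
    [AddCommGroup N] [Module L N] {m : ℕ} (u : Fin m → M) (ψ : Fin m → (M →ₗ[L] N))
    (h0 : ∀ j, ψ j (u j) ≠ 0) (h1 : ∀ i j, i < j → ψ j (u i) = 0) :
    LinearIndependent L u := by
  rw [linearIndependent_iff']
  intro s
  induction s using Finset.induction_on_max with
  | empty => simp
  | insert j s hmax ih =>
    intro g hsum i hi
    have hjs : j ∉ s := fun h => lt_irrefl j (hmax j h)
    have hgj : g j = 0 := by
      have h2 := congrArg (ψ j) hsum
      rw [map_sum, map_zero, Finset.sum_insert hjs] at h2
      rw [Finset.sum_eq_zero (fun i hi => by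
        rw [map_smul, h1 i j (hmax i hi), smul_zero])] at h2
      rw [map_smul, add_zero, smul_eq_zero] at h2
      exact h2.resolve_right (h0 j)
    have hsum' : ∑ i ∈ s, g i • u i = 0 := by
      rw [Finset.sum_insert hjs, hgj, zero_smul, zero_add] at hsum
      exact hsum
    rcases Finset.mem_insert.mp hi with rfl | hi
    · exact hgj
    · exact ih g hsum' i hi

private lemma iMulti_ne_zero {L Q : Type*} [Field L] [AddCommGroup Q] [Module L Q]
    {k : ℕ} {v : Fin k → Q} (hv : LinearIndependent L v) :
    ιMulti L k v ≠ 0 := by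
  classical
  set p := Submodule.span L (Set.range v) with hp
  obtain ⟨r, hr⟩ := p.subtype.exists_leftInverse_of_injective (Submodule.ker_subtype p)
  let bs : Basis (Fin k) L p := Basis.span hv
  let Φ : Q →ₗ[L] (Fin k → L) := LinearMap.pi (fun i => (bs.coord i) ∘ₗ r)
  let D : Q [⋀^Fin k]→ₗ[L] L := (Matrix.detRowAlternating).compLinearMap Φ
  have hrv : ∀ i, r (v i) = bs i := by
    intro i
    have : v i = p.subtype (bs i) := congrArg Subtype.val (Module.Basis.span_apply hv i).symm
    rw [this, ← LinearMap.comp_apply, hr, LinearMap.id_apply]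
  have hD : D v = 1 := by
    have hM : Matrix.of (fun i => Φ (v i)) = (1 : Matrix (Fin k) (Fin k) L) := by
      ext i j
      simp only [Matrix.of_apply, Φ, LinearMap.pi_apply, LinearMap.comp_apply, hrv,
        Basis.coord_apply, Basis.repr_self, Matrix.one_apply]
      rw [Finsupp.single_apply]
    show Matrix.det (Matrix.of fun i => Φ (v i)) = 1
    rw [hM, Matrix.det_one]
  intro h
  have h2 := congrArg
    (liftAlternating (R := L) (M := Q)
      (Function.update (fun i => (0 : Q [⋀^Fin i]→ₗ[L] L)) k D)) h
  rw [liftAlternating_apply_ιMulti, map_zero, Function.update_self, hD] at h2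
  exact one_ne_zero h2

private lemma iMulti_mem_span {L Q : Type*} [Field L] [AddCommGroup Q] [Module L Q] {n k : ℕ}
    (e : Basis (Fin n) L Q) (v : Fin k → Q) :
    ιMulti L k v ∈ Submodule.span L
      (Set.range (ExteriorAlgebra.ιMulti_family L k (fun i : Fin n => e i))) := by
  classical
  set T := Set.range (ExteriorAlgebra.ιMulti_family L k (fun i : Fin n => e i)) with hT
  have hmono : ∀ σ : Fin k → Fin n, ιMulti L k (fun j => e (σ j)) ∈ Submodule.span L T := by
    intro σ
    by_cases hσ : Function.Injective σ
    · -- sort σ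
      set S : Finset (Fin n) := Finset.univ.image σ with hS
      have hcard : S.card = k := by
        rw [hS, Finset.card_image_of_injective _ hσ, Finset.card_univ, Fintype.card_fin]
      have hrange : Set.range σ = (S : Set (Fin n)) := by
        ext l; simp [hS]
      let π : Fin k ≃ Fin k :=
        ((Equiv.ofInjective σ hσ).trans (Equiv.setCongr hrange)).trans
          (S.orderIsoOfFin hcard).toEquiv.symm
      have hcomp : (fun j => e (σ j)) =
          (fun j => e ((S.orderIsoOfFin hcard) j)) ∘ π := by
        funext j
        simp only [Function.comp_apply, π, Equiv.trans_apply]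
        congr 1
        exact (congrArg Subtype.val ((S.orderIsoOfFin hcard).apply_symm_apply
          ((Equiv.setCongr hrange) ((Equiv.ofInjective σ hσ) j)))).symm
      rw [hcomp, AlternatingMap.map_perm]
      refine Submodule.smul_mem _ _ (Submodule.subset_span ?_)
      exact ⟨⟨S, hcard⟩, rfl⟩
    · rw [AlternatingMap.map_eq_zero_of_not_injective _ _ (fun h => hσ (fun x y hxy => h (congrArg e hxy)))]
      exact Submodule.zero_mem _
  have h1 : ιMulti L k v =
      (ιMulti L k : Q [⋀^Fin k]→ₗ[L] ExteriorAlgebra L Q).toMultilinearMap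
        (fun j => ∑ l, e.repr (v j) l • e l) := by
    have harg : v = fun j => ∑ l, e.repr (v j) l • e l := by
      funext j
      rw [Basis.sum_repr]
    conv_lhs => rw [harg]
    rfl
  rw [h1, MultilinearMap.map_sum]
  refine Submodule.sum_mem _ (fun σ _ => ?_)
  rw [MultilinearMap.map_smul_univ]
  exact Submodule.smul_mem _ _ (hmono σ)

private lemma exists_avoiding {L W : Type*} [Field L] [Infinite L] [AddCommGroup W]
    [Module L W] [FiniteDimensional L W] {m : ℕ} (hm : 0 < m) (U : Fin m → Submodule L W)
    (d : ℕ) (hd : ∀ i, finrank L (U i) ≤ d) :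
    ∀ k : ℕ, k + d ≤ finrank L W → ∃ C : Submodule L W, finrank L ↥C = k ∧ ∀ i, C ⊓ U i = ⊥ := by
  intro k
  induction k with
  | zero => exact fun _ => ⟨⊥, by simp, fun i => by simp⟩
  | succ k ih =>
    intro hk
    obtain ⟨C, hCrank, hC⟩ := ih (by omega)
    have hne : ∀ i, C ⊔ U i ≠ ⊤ := by
      intro i h
      have h1 : finrank L ↥(C ⊔ U i) ≤ k + d := by
        have := Submodule.finrank_sup_add_finrank_inf_eq C (U i)
        have h2 := hd i
        omega
      rw [h, finrank_top] at h1
      omega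
    have hcover : (⋃ i : Fin m, ((C ⊔ U i : Submodule L W) : Set W)) ≠ Set.univ := by
      intro h
      obtain ⟨i, hi⟩ := Subspace.exists_eq_top_of_iUnion_eq_univ h
      exact hne i hi
    obtain ⟨x, hx⟩ := Set.ne_univ_iff_exists_notMem _ |>.mp hcover
    simp only [Set.mem_iUnion, not_exists, SetLike.mem_coe] at hx
    have hxC : x ∉ C := by
      intro h
      exact hx ⟨0, hm⟩ (Submodule.mem_sup_left h)
    have hxne : x ≠ 0 := fun h => hxC (h ▸ C.zero_mem)
    refine ⟨C ⊔ L ∙ x, ?_, ?_⟩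
    · have hinf : C ⊓ (L ∙ x) = ⊥ := by
        rw [Submodule.eq_bot_iff]
        intro y ⟨hyC, hyx⟩
        obtain ⟨t, rfl⟩ := Submodule.mem_span_singleton.mp hyx
        rcases eq_or_ne t 0 with rfl | ht
        · simp
        · exact absurd (by simpa [ht] using C.smul_mem t⁻¹ hyC) hxC
      have := Submodule.finrank_sup_add_finrank_inf_eq C (L ∙ x)
      rw [hinf, finrank_bot, finrank_span_singleton hxne] at this
      omega
    · intro i
      rw [Submodule.eq_bot_iff]
      rintro y ⟨hy1, hy2⟩
      obtain ⟨c, hcC, z, hz, rfl⟩ := Submodule.mem_sup.mp hy1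
      obtain ⟨t, rfl⟩ := Submodule.mem_span_singleton.mp hz
      rcases eq_or_ne t 0 with rfl | ht
      · rw [zero_smul, add_zero] at hy2 ⊢
        have : c ∈ C ⊓ U i := ⟨hcC, hy2⟩
        rw [hC i] at this
        exact this
      · exfalso
        apply hx i
        have hxmem : x = t⁻¹ • ((c + t • x) - c) := by
          rw [add_sub_cancel_left, smul_smul, inv_mul_cancel₀ ht, one_smul]
        rw [hxmem]
        refine Submodule.smul_mem _ _ (Submodule.sub_mem _ ?_ ?_)
        · exact Submodule.mem_sup_right hy2
        · exact Submodule.mem_sup_left hcC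

private lemma aux_fd {L W : Type*} [Field L] [Infinite L] [AddCommGroup W] [Module L W]
    [FiniteDimensional L W] (m a b : ℕ) (f : Fin m → Fin a → W) (g : Fin m → Fin b → W)
    (hdiag : ∀ i, LinearIndependent L (Fin.append (f i) (g i)))
    (hcross : ∀ i j, i < j → ¬ LinearIndependent L (Fin.append (f i) (g j))) :
    m ≤ (a + b).choose a := by
  rcases Nat.eq_zero_or_pos m with rfl | hm
  · exact Nat.zero_le _
  classical
  set N := finrank L W with hN
  set U : Fin m → Submodule L W :=
    fun i => Submodule.span L (Set.range (Fin.append (f i) (g i))) with hUdef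
  have hU : ∀ i, finrank L ↥(U i) = a + b := by
    intro i
    rw [hUdef]
    rw [finrank_span_eq_card (hdiag i), Fintype.card_fin]
  have hab : a + b ≤ N := by
    have h1 := (U ⟨0, hm⟩).finrank_le
    rw [hU ⟨0, hm⟩] at h1
    exact h1
  obtain ⟨C, hCrank, hC⟩ := exists_avoiding hm U (a + b)
    (fun i => le_of_eq (hU i)) (N - (a + b)) (by omega)
  have hQrank : finrank L (W ⧸ C) = a + b := by
    have := Submodule.finrank_quotient_add_finrank C
    omega
  let e : Basis (Fin (a + b)) L (W ⧸ C) := finBasisOfFinrankEq L (W ⧸ C) hQrank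
  let F : Fin m → Fin a → W ⧸ C := fun i => C.mkQ ∘ f i
  let G : Fin m → Fin b → W ⧸ C := fun i => C.mkQ ∘ g i
  have hFG : ∀ i j, C.mkQ ∘ (Fin.append (f i) (g j)) = Fin.append (F i) (G j) :=
    fun i j => comp_append _ _ _
  have hdiagQ : ∀ i, LinearIndependent L (Fin.append (F i) (G i)) := by
    intro i
    rw [← hFG i i]
    refine (hdiag i).map ?_
    rw [Submodule.ker_mkQ, disjoint_iff, inf_comm]
    exact hC i
  have hcrossQ : ∀ i j, i < j → ¬ LinearIndependent L (Fin.append (F i) (G j)) := by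
    intro i j hij h
    apply hcross i j hij
    rw [← hFG i j] at h
    exact LinearIndependent.of_comp C.mkQ h
  set u : Fin m → ExteriorAlgebra L (W ⧸ C) := fun i => ιMulti L a (F i) with hu
  set ψ : Fin m → (ExteriorAlgebra L (W ⧸ C) →ₗ[L] ExteriorAlgebra L (W ⧸ C)) :=
    fun j => LinearMap.mulRight L (ιMulti L b (G j)) with hψdef
  have hψ : ∀ i j, ψ j (u i) = ιMulti L (a + b) (Fin.append (F i) (G j)) := by
    intro i j
    simp only [hψdef, hu, LinearMap.mulRight_apply]
    exact iMulti_append (F i) (G j)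
  have hindep : LinearIndependent L u := by
    apply triangular_indep u ψ
    · intro j; rw [hψ]; exact iMulti_ne_zero (hdiagQ j)
    · intro i j hij; rw [hψ]
      exact AlternatingMap.map_linearDependent _ _ (hcrossQ i j hij)
  set P := Submodule.span L
    (Set.range (ExteriorAlgebra.ιMulti_family L a (fun l : Fin (a + b) => e l))) with hP
  have hmem : ∀ i, u i ∈ P := fun i => iMulti_mem_span e (F i)
  let u' : Fin m → ↥P := fun i => ⟨u i, hmem i⟩
  have hindep' : LinearIndependent L u' := by
    apply LinearIndependent.of_comp P.subtype
    exact hindep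
  haveI : Module.Finite L ↥P := Module.Finite.span_of_finite L (Set.finite_range _)
  have h1 : m ≤ finrank L ↥P := by
    simpa using hindep'.fintype_card_le_finrank
  have h2 : finrank L ↥P ≤ (a + b).choose a := by
    refine le_trans (finrank_span_le_card _) ?_
    rw [Set.toFinset_range]
    refine le_trans (Finset.card_image_le) ?_
    rw [Finset.card_univ]
    rw [Fintype.card_eq_nat_card, Set.powersetCard.card]
    simp
  omega

private lemma aux_gen {L W : Type*} [Field L] [Infinite L] [AddCommGroup W] [Module L W]
    (m a b : ℕ) (f : Fin m → Fin a → W) (g : Fin m → Fin b → W)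
    (hdiag : ∀ i, LinearIndependent L (Fin.append (f i) (g i)))
    (hcross : ∀ i j, i < j → ¬ LinearIndependent L (Fin.append (f i) (g j))) :
    m ≤ (a + b).choose a := by
  classical
  set S : Set W := (⋃ i, Set.range (f i)) ∪ (⋃ i, Set.range (g i)) with hS
  have hSfin : S.Finite :=
    Set.Finite.union (Set.finite_iUnion fun i => Set.finite_range _)
      (Set.finite_iUnion fun i => Set.finite_range _)
  set W₀ := Submodule.span L S with hW₀
  haveI : Module.Finite L ↥W₀ := Module.Finite.span_of_finite L hSfin
  have hf : ∀ i k, f i k ∈ W₀ := fun i k =>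
    Submodule.subset_span (Set.mem_union_left _ (Set.mem_iUnion.mpr ⟨i, ⟨k, rfl⟩⟩))
  have hg : ∀ i k, g i k ∈ W₀ := fun i k =>
    Submodule.subset_span (Set.mem_union_right _ (Set.mem_iUnion.mpr ⟨i, ⟨k, rfl⟩⟩))
  let f' : Fin m → Fin a → ↥W₀ := fun i k => ⟨f i k, hf i k⟩
  let g' : Fin m → Fin b → ↥W₀ := fun i k => ⟨g i k, hg i k⟩
  refine aux_fd (L := L) (W := ↥W₀) m a b f' g' ?_ ?_
  · intro i
    apply LinearIndependent.of_comp W₀.subtype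
    rw [comp_append]
    exact hdiag i
  · intro i j hij h
    apply hcross i j hij
    have h2 := h.map' W₀.subtype (Submodule.ker_subtype _)
    rw [comp_append] at h2
    exact h2

open TensorProduct in
private lemma indep_baseChange {K V : Type*} [Field K] [AddCommGroup V] [Module K V]
    (L : Type*) [Field L] [Algebra K L] {ι : Type*} {v : ι → V}
    (hv : LinearIndependent K v) :
    LinearIndependent L (fun i => (1 : L) ⊗ₜ[K] v i : ι → L ⊗[K] V) := by
  have hvr := (linearIndepOn_id_range_iff hv.injective).mpr hv
  let bV := Basis.extend hvr
  have hb := (bV.baseChange L).linearIndependent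
  have hcomp : (fun i => (1 : L) ⊗ₜ[K] v i : ι → L ⊗[K] V) =
      (bV.baseChange L) ∘ (fun i =>
        (⟨v i, hvr.subset_extend (Set.subset_univ _) ⟨i, rfl⟩⟩ :
          ↥(hvr.extend (Set.subset_univ _)))) := by
    funext i
    simp only [Function.comp_apply, Basis.baseChange_apply]
    congr 1
    exact (Basis.extend_apply_self hvr ⟨v i, hvr.subset_extend (Set.subset_univ _) ⟨i, rfl⟩⟩).symm
  rw [hcomp]
  refine hb.comp _ (fun i j hij => ?_)
  exact hv.injective (congrArg Subtype.val hij)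

open TensorProduct in
private lemma dep_baseChange {K V : Type*} [Field K] [AddCommGroup V] [Module K V]
    (L : Type*) [Field L] [Algebra K L] {n : ℕ} {v : Fin n → V}
    (hv : ¬ LinearIndependent K v) :
    ¬ LinearIndependent L (fun i => (1 : L) ⊗ₜ[K] v i : Fin n → L ⊗[K] V) := by
  rw [Fintype.not_linearIndependent_iff] at hv ⊢
  obtain ⟨c, hc, i0, hi0⟩ := hv
  refine ⟨fun i => algebraMap K L (c i), ?_, i0, ?_⟩
  · calc ∑ i, algebraMap K L (c i) • ((1 : L) ⊗ₜ[K] v i)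
        = ∑ i, (1 : L) ⊗ₜ[K] (c i • v i) :=
          Finset.sum_congr rfl (fun i _ => by rw [algebraMap_smul, TensorProduct.tmul_smul])
      _ = (1 : L) ⊗ₜ[K] (∑ i, c i • v i) := (TensorProduct.tmul_sum _ _ _).symm
      _ = 0 := by rw [hc, TensorProduct.tmul_zero]
  · exact fun h => hi0 ((algebraMap K L).injective (h.trans (map_zero _).symm))

open TensorProduct in
theorem skew_bollobas_subspaces_general_field {K V : Type*} [Field K]
    [AddCommGroup V] [Module K V] (m a b : ℕ)
    (A B : Fin m → Submodule K V)
    (hAfin : ∀ i, FiniteDimensional K ↥(A i))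
    (hBfin : ∀ i, FiniteDimensional K ↥(B i))
    (hA : ∀ i, Module.finrank K ↥(A i) = a)
    (hB : ∀ i, Module.finrank K ↥(B i) = b)
    (hdisj : ∀ i, A i ⊓ B i = ⊥)
    (hcross : ∀ i j : Fin m, i < j → A i ⊓ B j ≠ ⊥) :
    m ≤ (a + b).choose a := by
  classical
  let bA : ∀ i, Basis (Fin a) K ↥(A i) := fun i => finBasisOfFinrankEq K ↥(A i) (hA i)
  let bB : ∀ i, Basis (Fin b) K ↥(B i) := fun i => finBasisOfFinrankEq K ↥(B i) (hB i)
  let f : Fin m → Fin a → V := fun i k => ((bA i k : ↥(A i)) : V)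
  let g : Fin m → Fin b → V := fun i k => ((bB i k : ↥(B i)) : V)
  have hspanf : ∀ i, Submodule.span K (Set.range (f i)) = A i := by
    intro i
    have h1 : Set.range (f i) = (A i).subtype '' (Set.range (bA i)) := by
      rw [← Set.range_comp]; rfl
    rw [h1, ← Submodule.map_span, Basis.span_eq, Submodule.map_top, Submodule.range_subtype]
  have hspang : ∀ i, Submodule.span K (Set.range (g i)) = B i := by
    intro i
    have h1 : Set.range (g i) = (B i).subtype '' (Set.range (bB i)) := by
      rw [← Set.range_comp]; rfl
    rw [h1, ← Submodule.map_span, Basis.span_eq, Submodule.map_top, Submodule.range_subtype]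
  have hindf : ∀ i, LinearIndependent K (f i) := fun i =>
    (bA i).linearIndependent.map' (A i).subtype (Submodule.ker_subtype _)
  have hindg : ∀ i, LinearIndependent K (g i) := fun i =>
    (bB i).linearIndependent.map' (B i).subtype (Submodule.ker_subtype _)
  have hdiagK : ∀ i, LinearIndependent K (Fin.append (f i) (g i)) := by
    intro i
    have hsum : LinearIndependent K (Sum.elim (f i) (g i)) :=
      (hindf i).sum_type (hindg i)
        (by rw [hspanf, hspang]; exact disjoint_iff.mpr (hdisj i))
    have h1 : Fin.append (f i) (g i) = Sum.elim (f i) (g i) ∘ finSumFinEquiv.symm := by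
      funext l
      refine Fin.addCases (fun l => ?_) (fun l => ?_) l <;>
        simp [Fin.append_left, Fin.append_right,
          finSumFinEquiv_symm_apply_castAdd, finSumFinEquiv_symm_apply_natAdd]
    rw [h1]
    exact hsum.comp _ finSumFinEquiv.symm.injective
  have hcrossK : ∀ i j, i < j → ¬ LinearIndependent K (Fin.append (f i) (g j)) := by
    intro i j hij h
    apply hcross i j hij
    have hsum : LinearIndependent K (Sum.elim (f i) (g j)) := by
      have h1 : Sum.elim (f i) (g j) = Fin.append (f i) (g j) ∘ finSumFinEquiv := by
        funext l
        cases l with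
        | inl l => simp [Fin.append_left]
        | inr l => simp [Fin.append_right]
      rw [h1]
      exact h.comp _ finSumFinEquiv.injective
    have hd2 := (linearIndependent_sum.mp hsum).2.2
    rw [Sum.elim_comp_inl, Sum.elim_comp_inr] at hd2
    rw [hspanf, hspang] at hd2
    exact disjoint_iff.mp hd2
  let L := AlgebraicClosure K
  refine aux_gen (L := L) (W := L ⊗[K] V) m a b
    (fun i k => (1 : L) ⊗ₜ[K] f i k) (fun i k => (1 : L) ⊗ₜ[K] g i k) ?_ ?_
  · intro i
    have h1 := indep_baseChange L (hdiagK i)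
    have h2 := comp_append (fun w : V => (1 : L) ⊗ₜ[K] w) (f i) (g i)
    show LinearIndependent L
      (Fin.append ((fun w : V => (1 : L) ⊗ₜ[K] w) ∘ f i) ((fun w : V => (1 : L) ⊗ₜ[K] w) ∘ g i))
    rw [← h2]
    exact h1
  · intro i j hij
    have h1 := dep_baseChange L (hcrossK i j hij)
    intro h
    apply h1
    show LinearIndependent L ((fun w : V => (1 : L) ⊗ₜ[K] w) ∘ Fin.append (f i) (g j))
    rw [comp_append]
    exact h
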